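/- Fix $1 \le s < r$, $0 \le b \le n$, and a multipartition $\lambda$ of $n$ with $r$ components satisfying $|\lambda^{(1)}| + \dots + |\lambda^{(s)}| = b$. Let $\mathrm{Std}_{b,n-b}(\lambda)$ be the set of standard $\lambda$-tableaux in which $1,\dots,b$ appear in the first $s$ components and $b+1,\dots,n$ appear in the last $r-s$ components. Then $\mathrm{Std}(\lambda)$ is the disjoint union over distinguished right coset representatives $w$ of $\mathfrak{S}_b \times \mathfrak{S}_{n-b}$ in $\mathfrak{S}_n$ of the sets $\mathrm{Std}_{b,n-b}(\lambda)\,w$. -/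

import Mathlib

/-- A partition, encoded as a weakly decreasing list of positive parts. -/
def IsPartitionList (l : List ℕ) : Prop :=
  l.Pairwise (· ≥ ·) ∧ ∀ x ∈ l, 0 < x

/-- A multipartition of `n` with `r` components: an `r`-tuple of partitions whose
sizes sum to `n`. -/
def IsMultipartition (n : ℕ) {r : ℕ} (lam : Fin r → List ℕ) : Prop :=
  (∀ k, IsPartitionList (lam k)) ∧ ∑ k, (lam k).sum = n

/-- The diagram of a multicomposition `lam`: nodes `(k, i, j)` (component `k`, row `i`,
column `j`, all 0-based) with `j < lam^{(k)}_i`. -/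
def Nodes {r : ℕ} (lam : Fin r → List ℕ) : Set (Fin r × ℕ × ℕ) :=
  {x | x.2.2 < (lam x.1).getD x.2.1 0}

/-- Standard `lam`-tableaux: bijective fillings of the diagram of `lam` by `{1,…,n}`
(encoded as functions vanishing off the diagram) whose rows and columns increase. -/
def StdTab (n : ℕ) {r : ℕ} (lam : Fin r → List ℕ) : Set (Fin r × ℕ × ℕ → ℕ) :=
  {f | Set.BijOn f (Nodes lam) (Set.Icc 1 n) ∧
       (∀ x, x ∉ Nodes lam → f x = 0) ∧
       (∀ k i j, (k, i, j + 1) ∈ Nodes lam → f (k, i, j) < f (k, i, j + 1)) ∧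
       (∀ k i j, (k, i + 1, j) ∈ Nodes lam → f (k, i, j) < f (k, i + 1, j))}

/-- Coxeter length of `w ∈ 𝔖_n`: the number of inversions. -/
def len (n : ℕ) (w : Equiv.Perm ℕ) : ℕ :=
  (((Finset.Icc 1 n) ×ˢ (Finset.Icc 1 n)).filter
    (fun p => p.1 < p.2 ∧ w p.2 < w p.1)).card

/-- Membership in the Young subgroup `𝔖_{(b, n-b)} = 𝔖_b × 𝔖_{n-b}` of `𝔖_n`. -/
def InYoung (n b : ℕ) (u : Equiv.Perm ℕ) : Prop :=
  (∀ i, i ∉ Set.Icc 1 n → u i = i) ∧ (∀ i, 1 ≤ i → i ≤ b → u i ≤ b)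

/-- `w` is a distinguished (minimal length in its coset) right coset representative
of `𝔖_{(b, n-b)}` in `𝔖_n`.  (With the paper's right-action convention, the paper
product `u·w` is `w * u` in Lean.) -/
def IsDistinguished (n b : ℕ) (w : Equiv.Perm ℕ) : Prop :=
  (∀ i, i ∉ Set.Icc 1 n → w i = i) ∧ ∀ u, InYoung n b u → len n w ≤ len n (w * u)

/-- The standard `lam`-tableaux in `Std_{b,n-b}(lam)`: entries `1,…,b` lie in the
first `s` components and entries `b+1,…,n` lie in the last components. -/
def StdBN (n s b : ℕ) {r : ℕ} (lam : Fin r → List ℕ) : Set (Fin r × ℕ × ℕ → ℕ) :=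
  {f | f ∈ StdTab n lam ∧ ∀ x ∈ Nodes lam, (f x ≤ b ↔ (x.1 : ℕ) < s)}

-- ############ helpers ############

/-- fixes outside [1,n] implies maps [1,n] into [1,n] -/
lemma maps_Icc {n : ℕ} {w : Equiv.Perm ℕ} (hw : ∀ i, i ∉ Set.Icc 1 n → w i = i) :
    ∀ i, 1 ≤ i → i ≤ n → 1 ≤ w i ∧ w i ≤ n := by
  intro i h1 h2
  by_contra h
  have hni : w i ∉ Set.Icc 1 n := by
    simp only [Set.mem_Icc]; omega
  have := hw _ hni
  have : w i = i := w.injective this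
  exact hni (by rw [this]; exact Set.mem_Icc.2 ⟨h1, h2⟩)

lemma symm_fix {n : ℕ} {w : Equiv.Perm ℕ} (hw : ∀ i, i ∉ Set.Icc 1 n → w i = i) :
    ∀ i, i ∉ Set.Icc 1 n → w.symm i = i := by
  intro i hi
  conv_lhs => rw [← hw i hi]
  exact w.symm_apply_apply i

/-- a perm fixing outside [1,n] and mapping [1,b] into [1,b] permutes [1,b] -/
lemma young_block1 {n b : ℕ} {u : Equiv.Perm ℕ} (hb : b ≤ n) (hu : InYoung n b u) :
    ∀ i, 1 ≤ i → i ≤ b → (1 ≤ u i ∧ u i ≤ b) ∧ (1 ≤ u.symm i ∧ u.symm i ≤ b) := by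
  have h1 : ∀ i, 1 ≤ i → i ≤ b → 1 ≤ u i ∧ u i ≤ b := by
    intro i h1 h2
    refine ⟨?_, hu.2 i h1 h2⟩
    rcases Nat.eq_zero_or_pos (u i) with h | h
    · have h0 : u 0 = 0 := hu.1 0 (by simp)
      have : i = 0 := u.injective (by rw [h, h0])
      omega
    · exact h
  refine fun i hi1 hib => ⟨h1 i hi1 hib, ?_⟩
  -- u maps Icc 1 b injectively into itself, hence onto
  have himg : (Finset.Icc 1 b).image u = Finset.Icc 1 b := by
    apply Finset.eq_of_subset_of_card_le
    · intro m hm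
      simp only [Finset.mem_image, Finset.mem_Icc] at hm ⊢
      obtain ⟨j, hj, rfl⟩ := hm
      exact h1 j hj.1 hj.2
    · rw [Finset.card_image_of_injective _ u.injective]
  have : i ∈ (Finset.Icc 1 b).image u := by rw [himg]; simp [hi1, hib]
  obtain ⟨j, hj, hji⟩ := Finset.mem_image.1 this
  simp only [Finset.mem_Icc] at hj
  have : u.symm i = j := by rw [← hji]; exact u.symm_apply_apply j
  omega

lemma young_block2 {n b : ℕ} {u : Equiv.Perm ℕ} (hb : b ≤ n) (hu : InYoung n b u) :
    ∀ i, b + 1 ≤ i → i ≤ n → (b + 1 ≤ u i ∧ u i ≤ n) ∧ (b + 1 ≤ u.symm i ∧ u.symm i ≤ n) := by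
  intro i h1 h2
  have hui := maps_Icc hu.1 i (by omega) h2
  have husi := maps_Icc (symm_fix hu.1) i (by omega) h2
  constructor
  · refine ⟨?_, hui.2⟩
    by_contra h
    have : 1 ≤ u i ∧ u i ≤ b := ⟨hui.1, by omega⟩
    have := (young_block1 hb hu (u i) this.1 this.2).2
    rw [u.symm_apply_apply] at this
    omega
  · refine ⟨?_, husi.2⟩
    by_contra h
    have h' : 1 ≤ u.symm i ∧ u.symm i ≤ b := ⟨husi.1, by omega⟩
    have := (young_block1 hb hu (u.symm i) h'.1 h'.2).1
    rw [u.apply_symm_apply] at this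
    omega

def crossSet (n b : ℕ) (v : Equiv.Perm ℕ) : Finset (ℕ × ℕ) :=
  ((Finset.Icc 1 b) ×ˢ (Finset.Icc (b + 1) n)).filter (fun p => v p.2 < v p.1)

lemma cross_le_len {n b : ℕ} (hb : b ≤ n) (v : Equiv.Perm ℕ) :
    (crossSet n b v).card ≤ len n v := by
  apply Finset.card_le_card
  intro p hp
  simp only [crossSet, Finset.mem_filter, Finset.mem_product, Finset.mem_Icc] at hp
  simp only [len, Finset.mem_filter, Finset.mem_product, Finset.mem_Icc]
  refine ⟨⟨⟨hp.1.1.1, by omega⟩, by omega, hp.1.2.2⟩, by omega, hp.2⟩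

def IncBlocks (n b : ℕ) (v : Equiv.Perm ℕ) : Prop :=
  (∀ i j, 1 ≤ i → i < j → j ≤ b → v i < v j) ∧ (∀ i j, b + 1 ≤ i → i < j → j ≤ n → v i < v j)

lemma len_eq_cross {n b : ℕ} (hb : b ≤ n) {v : Equiv.Perm ℕ} (hv : IncBlocks n b v) :
    len n v = (crossSet n b v).card := by
  unfold len crossSet
  congr 1
  ext p
  simp only [Finset.mem_filter, Finset.mem_product, Finset.mem_Icc]
  constructor
  · rintro ⟨⟨⟨h1, h2⟩, h3, h4⟩, h5, h6⟩
    refine ⟨⟨⟨h1, ?_⟩, ?_, h4⟩, h6⟩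
    · by_contra h
      have : b + 1 ≤ p.1 := by omega
      exact absurd (hv.2 p.1 p.2 this h5 h4) (by omega)
    · by_contra h
      exact absurd (hv.1 p.1 p.2 h1 h5 (by omega)) (by omega)
  · rintro ⟨⟨⟨h1, h2⟩, h3, h4⟩, h5⟩
    exact ⟨⟨⟨h1, by omega⟩, by omega, h4⟩, by omega, h5⟩

lemma cross_mul_young {n b : ℕ} (hb : b ≤ n) (v : Equiv.Perm ℕ) {u : Equiv.Perm ℕ}
    (hu : InYoung n b u) : (crossSet n b (v * u)).card = (crossSet n b v).card := by
  apply Finset.card_bij (fun p _ => ((u p.1 : ℕ), (u p.2 : ℕ)))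
  · intro p hp
    simp only [crossSet, Finset.mem_filter, Finset.mem_product, Finset.mem_Icc] at hp ⊢
    obtain ⟨⟨⟨h1, h2⟩, h3, h4⟩, h5⟩ := hp
    have hB1 := (young_block1 hb hu p.1 h1 h2).1
    have hB2 := (young_block2 hb hu p.2 h3 h4).1
    exact ⟨⟨hB1, hB2⟩, h5⟩
  · intro p hp q hq h
    have h1 : u p.1 = u q.1 := congrArg Prod.fst h
    have h2 : u p.2 = u q.2 := congrArg Prod.snd h
    exact Prod.ext (u.injective h1) (u.injective h2)
  · intro p hp
    simp only [crossSet, Finset.mem_filter, Finset.mem_product, Finset.mem_Icc] at hp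
    obtain ⟨⟨⟨h1, h2⟩, h3, h4⟩, h5⟩ := hp
    refine ⟨(u.symm p.1, u.symm p.2), ?_, ?_⟩
    · show (u.symm p.1, u.symm p.2) ∈ crossSet n b (v * u)
      simp only [crossSet, Finset.mem_filter, Finset.mem_product, Finset.mem_Icc]
      simp only [Equiv.Perm.mul_apply, u.apply_symm_apply]
      exact ⟨⟨(young_block1 hb hu p.1 h1 h2).2, (young_block2 hb hu p.2 h3 h4).2⟩, h5⟩
    · simp [u.apply_symm_apply]

lemma distinguished_of_inc {n b : ℕ} (hb : b ≤ n) {w : Equiv.Perm ℕ}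
    (hfix : ∀ i, i ∉ Set.Icc 1 n → w i = i) (hinc : IncBlocks n b w) :
    IsDistinguished n b w := by
  refine ⟨hfix, fun u hu => ?_⟩
  rw [len_eq_cross hb hinc, ← cross_mul_young hb w hu]
  exact cross_le_len hb _

lemma len_swap_lt {n : ℕ} {w : Equiv.Perm ℕ} {i : ℕ} (h1 : 1 ≤ i) (h2 : i + 1 ≤ n)
    (hdesc : w (i + 1) < w i) : len n (w * Equiv.swap i (i + 1)) < len n w := by
  set τ := Equiv.swap i (i + 1) with hτ
  have htau : ∀ m, m ≠ i → m ≠ i + 1 → τ m = m := fun m h h' =>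
    Equiv.swap_apply_of_ne_of_ne h h'
  have hti : τ i = i + 1 := Equiv.swap_apply_left _ _
  have hti1 : τ (i + 1) = i := Equiv.swap_apply_right _ _
  unfold len
  have key : (((Finset.Icc 1 n) ×ˢ (Finset.Icc 1 n)).filter
      (fun p => p.1 < p.2 ∧ (w * τ) p.2 < (w * τ) p.1)).card ≤
      ((((Finset.Icc 1 n) ×ˢ (Finset.Icc 1 n)).filter
      (fun p => p.1 < p.2 ∧ w p.2 < w p.1)).erase (i, i + 1)).card := by
    apply Finset.card_le_card_of_injOn (fun p => (τ p.1, τ p.2))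
    · rintro ⟨p1, p2⟩ hp
      simp only [Finset.mem_coe, Finset.mem_filter, Finset.mem_product, Finset.mem_Icc] at hp
      simp only [Equiv.Perm.mul_apply] at hp
      obtain ⟨⟨⟨ha, hb'⟩, hc, hd⟩, he, hf⟩ := hp
      have hpne : ¬(p1 = i ∧ p2 = i + 1) := by
        rintro ⟨e1, e2⟩
        rw [e1, e2, hti, hti1] at hf
        omega
      have hlt : τ p1 < τ p2 := by
        by_cases e1 : p1 = i
        · by_cases e2 : p2 = i + 1
          · exact absurd ⟨e1, e2⟩ hpne
          · rw [e1, hti, htau p2 (by omega) e2]; omega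
        · by_cases e1' : p1 = i + 1
          · rw [e1', hti1, htau p2 (by omega) (by omega)]; omega
          · rw [htau p1 e1 e1']
            by_cases e2 : p2 = i
            · rw [e2, hti]; omega
            · by_cases e2' : p2 = i + 1
              · rw [e2', hti1]; omega
              · rw [htau p2 e2 e2']; omega
      have hmem1 : 1 ≤ τ p1 ∧ τ p1 ≤ n := by
        by_cases e1 : p1 = i
        · rw [e1, hti]; omega
        · by_cases e1' : p1 = i + 1
          · rw [e1', hti1]; omega
          · rw [htau p1 e1 e1']; omega
      have hmem2 : 1 ≤ τ p2 ∧ τ p2 ≤ n := by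
        by_cases e2 : p2 = i
        · rw [e2, hti]; omega
        · by_cases e2' : p2 = i + 1
          · rw [e2', hti1]; omega
          · rw [htau p2 e2 e2']; omega
      rw [Finset.mem_coe, Finset.mem_erase]
      constructor
      · intro h
        have e1 : τ p1 = i := congrArg Prod.fst h
        have e2 : τ p2 = i + 1 := congrArg Prod.snd h
        have f1 : p1 = i + 1 := by
          have := congrArg τ e1; rwa [Equiv.swap_apply_self, hti] at this
        have f2 : p2 = i := by
          have := congrArg τ e2; rwa [Equiv.swap_apply_self, hti1] at this
        omega
      · simp only [Finset.mem_filter, Finset.mem_product, Finset.mem_Icc]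
        exact ⟨⟨hmem1, hmem2⟩, hlt, hf⟩
    · intro p _ q _ h
      have e1 : τ p.1 = τ q.1 := congrArg Prod.fst h
      have e2 : τ p.2 = τ q.2 := congrArg Prod.snd h
      exact Prod.ext (τ.injective e1) (τ.injective e2)
  have hmem : (i, i + 1) ∈ ((Finset.Icc 1 n) ×ˢ (Finset.Icc 1 n)).filter
      (fun p => p.1 < p.2 ∧ w p.2 < w p.1) := by
    simp only [Finset.mem_filter, Finset.mem_product, Finset.mem_Icc]
    exact ⟨⟨⟨h1, by omega⟩, by omega, h2⟩, by omega, hdesc⟩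
  calc _ ≤ _ := key
    _ < _ := Finset.card_erase_lt_of_mem hmem

lemma inc_of_distinguished {n b : ℕ} (hb : b ≤ n) {w : Equiv.Perm ℕ}
    (hw : IsDistinguished n b w) : IncBlocks n b w := by
  have hadj : ∀ i, 1 ≤ i → i + 1 ≤ n → ((i + 1 ≤ b) ∨ (b + 1 ≤ i)) → w i < w (i + 1) := by
    intro i hi1 hin hblk
    by_contra h
    have hne : w i ≠ w (i + 1) := fun he => by
      have := w.injective he; omega
    have hdesc : w (i + 1) < w i := by omega
    have hy : InYoung n b (Equiv.swap i (i + 1)) := by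
      constructor
      · intro m hm
        simp only [Set.mem_Icc] at hm
        exact Equiv.swap_apply_of_ne_of_ne (by omega) (by omega)
      · intro m hm1 hmb
        rcases hblk with hB | hB
        · rcases eq_or_ne m i with rfl | hmi
          · rw [Equiv.swap_apply_left]; omega
          · rcases eq_or_ne m (i + 1) with rfl | hmi1
            · rw [Equiv.swap_apply_right]; omega
            · rw [Equiv.swap_apply_of_ne_of_ne hmi hmi1]; omega
        · rw [Equiv.swap_apply_of_ne_of_ne (by omega) (by omega)]; omega
    exact absurd (hw.2 _ hy) (by push_neg; exact len_swap_lt hi1 hin hdesc)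
  constructor
  · have key : ∀ j i, 1 ≤ i → i < j → j ≤ b → w i < w j := by
      intro j
      induction j with
      | zero => omega
      | succ j ih =>
        intro i hi1 hij hjb
        rcases eq_or_lt_of_le (Nat.lt_succ_iff.mp hij) with rfl | hlt
        · exact hadj i hi1 (by omega) (Or.inl (by omega))
        · exact (ih i hi1 hlt (by omega)).trans (hadj j (by omega) (by omega) (Or.inl hjb))
    exact fun i j h1 h2 h3 => key j i h1 h2 h3
  · have key : ∀ j i, b + 1 ≤ i → i < j → j ≤ n → w i < w j := by
      intro j
      induction j with
      | zero => omega
      | succ j ih =>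
        intro i hi1 hij hjn
        rcases eq_or_lt_of_le (Nat.lt_succ_iff.mp hij) with rfl | hlt
        · exact hadj i (by omega) (by omega) (Or.inr hi1)
        · exact (ih i hi1 hlt (by omega)).trans (hadj j (by omega) (by omega) (Or.inr (by omega)))
    exact fun i j h1 h2 h3 => key j i h1 h2 h3

lemma block1_eq {n b : ℕ} (hb : b ≤ n) {w w' : Equiv.Perm ℕ}
    (hw : IncBlocks n b w) (hw' : IncBlocks n b w')
    (himg : (Finset.Icc 1 b).image ⇑w = (Finset.Icc 1 b).image ⇑w') :
    ∀ m, 1 ≤ m → m ≤ b → w m = w' m := by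
  have hcA : ((Finset.Icc 1 b).image ⇑w).card = b := by
    rw [Finset.card_image_of_injective _ w.injective, Nat.card_Icc]; omega
  have hmono : StrictMono (fun i : Fin b => w (i + 1)) := by
    intro i j hij
    exact hw.1 (i + 1) (j + 1) (by omega) (by omega) (by omega)
  have hmono' : StrictMono (fun i : Fin b => w' (i + 1)) := by
    intro i j hij
    exact hw'.1 (i + 1) (j + 1) (by omega) (by omega) (by omega)
  have h1 : (fun i : Fin b => w (i + 1)) = ((Finset.Icc 1 b).image ⇑w).orderEmbOfFin hcA :=
    Finset.orderEmbOfFin_unique hcA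
      (fun i => Finset.mem_image.2 ⟨i + 1, by simp [Finset.mem_Icc], rfl⟩) hmono
  have h2 : (fun i : Fin b => w' (i + 1)) = ((Finset.Icc 1 b).image ⇑w).orderEmbOfFin hcA :=
    Finset.orderEmbOfFin_unique hcA
      (fun i => by rw [himg]; exact Finset.mem_image.2 ⟨i + 1, by simp [Finset.mem_Icc], rfl⟩)
      hmono'
  intro m hm1 hmb
  have hmv : m - 1 < b := by omega
  have := congrFun (h1.trans h2.symm) ⟨m - 1, hmv⟩
  simpa [Nat.sub_add_cancel hm1] using this

lemma block2_eq {n b : ℕ} (hb : b ≤ n) {w w' : Equiv.Perm ℕ}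
    (hw : IncBlocks n b w) (hw' : IncBlocks n b w')
    (himg : (Finset.Icc (b + 1) n).image ⇑w = (Finset.Icc (b + 1) n).image ⇑w') :
    ∀ m, b + 1 ≤ m → m ≤ n → w m = w' m := by
  have hcA : ((Finset.Icc (b + 1) n).image ⇑w).card = n - b := by
    rw [Finset.card_image_of_injective _ w.injective, Nat.card_Icc]; omega
  have hmono : StrictMono (fun i : Fin (n - b) => w (b + 1 + i)) := by
    intro i j hij
    exact hw.2 (b + 1 + i) (b + 1 + j) (by omega) (by omega) (by omega)
  have hmono' : StrictMono (fun i : Fin (n - b) => w' (b + 1 + i)) := by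
    intro i j hij
    exact hw'.2 (b + 1 + i) (b + 1 + j) (by omega) (by omega) (by omega)
  have h1 : (fun i : Fin (n - b) => w (b + 1 + i)) =
      ((Finset.Icc (b + 1) n).image ⇑w).orderEmbOfFin hcA :=
    Finset.orderEmbOfFin_unique hcA
      (fun i => Finset.mem_image.2 ⟨b + 1 + i, by simp [Finset.mem_Icc]; omega, rfl⟩) hmono
  have h2 : (fun i : Fin (n - b) => w' (b + 1 + i)) =
      ((Finset.Icc (b + 1) n).image ⇑w).orderEmbOfFin hcA :=
    Finset.orderEmbOfFin_unique hcA
      (fun i => by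
        rw [himg]
        exact Finset.mem_image.2 ⟨b + 1 + i, by simp [Finset.mem_Icc]; omega, rfl⟩)
      hmono'
  intro m hm1 hmn
  have hmv : m - b - 1 < n - b := by omega
  have := congrFun (h1.trans h2.symm) ⟨m - b - 1, hmv⟩
  simpa [show b + 1 + (m - b - 1) = m by omega] using this

lemma eq_of_distinguished {n b : ℕ} (hb : b ≤ n) {w w' : Equiv.Perm ℕ}
    (hw : IsDistinguished n b w) (hw' : IsDistinguished n b w')
    (himg : ∀ m, 1 ≤ m → m ≤ b → ∃ m', 1 ≤ m' ∧ m' ≤ b ∧ w m = w' m') : w = w' := by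
  have incw := inc_of_distinguished hb hw
  have incw' := inc_of_distinguished hb hw'
  have hA : (Finset.Icc 1 b).image ⇑w = (Finset.Icc 1 b).image ⇑w' := by
    apply Finset.eq_of_subset_of_card_le
    · intro m hm
      obtain ⟨j, hj, rfl⟩ := Finset.mem_image.1 hm
      simp only [Finset.mem_Icc] at hj
      obtain ⟨m', h1, h2, h3⟩ := himg j hj.1 hj.2
      exact Finset.mem_image.2 ⟨m', by simp [Finset.mem_Icc]; omega, h3.symm⟩
    · rw [Finset.card_image_of_injective _ w.injective,
        Finset.card_image_of_injective _ w'.injective]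
  have hIcc : ∀ v : Equiv.Perm ℕ, (∀ i, i ∉ Set.Icc 1 n → v i = i) →
      (Finset.Icc 1 n).image ⇑v = Finset.Icc 1 n := by
    intro v hv
    apply Finset.eq_of_subset_of_card_le
    · intro m hm
      obtain ⟨j, hj, rfl⟩ := Finset.mem_image.1 hm
      simp only [Finset.mem_Icc] at hj ⊢
      exact maps_Icc hv j hj.1 hj.2
    · rw [Finset.card_image_of_injective _ v.injective]
  have hsplit : ∀ v : Equiv.Perm ℕ, (∀ i, i ∉ Set.Icc 1 n → v i = i) →
      (Finset.Icc (b + 1) n).image ⇑v = (Finset.Icc 1 n) \ ((Finset.Icc 1 b).image ⇑v) := by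
    intro v hv
    have hun : (Finset.Icc 1 b) ∪ (Finset.Icc (b + 1) n) = Finset.Icc 1 n := by
      ext m; simp only [Finset.mem_union, Finset.mem_Icc]; omega
    apply Finset.eq_of_subset_of_card_le
    · intro m hm
      obtain ⟨j, hj, rfl⟩ := Finset.mem_image.1 hm
      simp only [Finset.mem_Icc] at hj
      rw [Finset.mem_sdiff]
      constructor
      · simp only [Finset.mem_Icc]
        exact maps_Icc hv j (by omega) hj.2
      · intro hmem
        obtain ⟨j', hj', he⟩ := Finset.mem_image.1 hmem
        simp only [Finset.mem_Icc] at hj'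
        have := v.injective he
        omega
    · rw [Finset.card_image_of_injective _ v.injective]
      rw [Finset.card_sdiff_of_subset]
      · rw [Finset.card_image_of_injective _ v.injective]
        simp [Nat.card_Icc]
      · rw [← hIcc v hv]
        apply Finset.image_subset_image
        rw [← hun]
        exact Finset.subset_union_left
  have hB : (Finset.Icc (b + 1) n).image ⇑w = (Finset.Icc (b + 1) n).image ⇑w' := by
    rw [hsplit w hw.1, hsplit w' hw'.1, hA]
  apply Equiv.ext
  intro m
  by_cases h1 : 1 ≤ m ∧ m ≤ b
  · exact block1_eq hb incw incw' hA m h1.1 h1.2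
  · by_cases h2 : 1 ≤ m ∧ m ≤ n
    · exact block2_eq hb incw incw' hB m (by omega) h2.2
    · rw [hw.1 m (by simp [Set.mem_Icc]; omega), hw'.1 m (by simp [Set.mem_Icc]; omega)]

lemma exists_perm {n b : ℕ} (hb : b ≤ n) (A : Finset ℕ) (hA : A ⊆ Finset.Icc 1 n)
    (hcard : A.card = b) :
    ∃ w : Equiv.Perm ℕ, (∀ i, i ∉ Set.Icc 1 n → w i = i) ∧ IncBlocks n b w ∧
      (∀ m, 1 ≤ m → m ≤ b → w m ∈ A) ∧
      (∀ m, b + 1 ≤ m → m ≤ n → w m ∈ (Finset.Icc 1 n) \ A) := by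
  classical
  set B : Finset ℕ := (Finset.Icc 1 n) \ A with hBdef
  have hcardB : B.card = n - b := by
    rw [hBdef, Finset.card_sdiff_of_subset hA, Nat.card_Icc, hcard]; omega
  set eA := A.orderEmbOfFin hcard with heA
  set eB := B.orderEmbOfFin hcardB with heB
  set φ : ℕ → ℕ := fun m =>
    if h : 1 ≤ m ∧ m ≤ b then eA ⟨m - 1, by omega⟩
    else if h2 : 1 ≤ m ∧ m ≤ n then eB ⟨m - b - 1, by omega⟩
    else m with hφ
  have hφ1 : ∀ m (h : 1 ≤ m ∧ m ≤ b), φ m = eA ⟨m - 1, by omega⟩ := by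
    intro m h; simp only [hφ, dif_pos h]
  have hφ2 : ∀ m (h2 : 1 ≤ m ∧ m ≤ n) (h : ¬(1 ≤ m ∧ m ≤ b)),
      φ m = eB ⟨m - b - 1, by omega⟩ := by
    intro m h2 h; simp only [hφ, dif_neg h, dif_pos h2]
  have hφ3 : ∀ m, ¬(1 ≤ m ∧ m ≤ n) → φ m = m := by
    intro m h
    have h' : ¬(1 ≤ m ∧ m ≤ b) := by omega
    simp only [hφ, dif_neg h, dif_neg h']
  have hAmem : ∀ i, eA i ∈ A := fun i => Finset.orderEmbOfFin_mem A hcard i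
  have hBmem : ∀ i, eB i ∈ B := fun i => Finset.orderEmbOfFin_mem B hcardB i
  have hbij : Function.Bijective φ := by
    constructor
    · intro a a' he
      by_cases h1 : 1 ≤ a ∧ a ≤ b <;> by_cases h1' : 1 ≤ a' ∧ a' ≤ b
      · rw [hφ1 a h1, hφ1 a' h1'] at he
        have := eA.injective he
        have : a - 1 = a' - 1 := congrArg Fin.val this
        omega
      · exfalso
        rw [hφ1 a h1] at he
        by_cases h2' : 1 ≤ a' ∧ a' ≤ n
        · rw [hφ2 a' h2' h1'] at he
          have hmA := hAmem ⟨a - 1, by omega⟩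
          have hmB := hBmem ⟨a' - b - 1, by omega⟩
          rw [he] at hmA
          rw [hBdef, Finset.mem_sdiff] at hmB
          exact hmB.2 hmA
        · rw [hφ3 a' h2'] at he
          have hmA := hAmem ⟨a - 1, by omega⟩
          rw [he] at hmA
          have := hA hmA
          simp only [Finset.mem_Icc] at this
          omega
      · exfalso
        rw [hφ1 a' h1'] at he
        by_cases h2 : 1 ≤ a ∧ a ≤ n
        · rw [hφ2 a h2 h1] at he
          have hmA := hAmem ⟨a' - 1, by omega⟩
          have hmB := hBmem ⟨a - b - 1, by omega⟩
          rw [← he] at hmA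
          rw [hBdef, Finset.mem_sdiff] at hmB
          exact hmB.2 hmA
        · rw [hφ3 a h2] at he
          have hmA := hAmem ⟨a' - 1, by omega⟩
          rw [← he] at hmA
          have := hA hmA
          simp only [Finset.mem_Icc] at this
          omega
      · by_cases h2 : 1 ≤ a ∧ a ≤ n <;> by_cases h2' : 1 ≤ a' ∧ a' ≤ n
        · rw [hφ2 a h2 h1, hφ2 a' h2' h1'] at he
          have := eB.injective he
          have : a - b - 1 = a' - b - 1 := congrArg Fin.val this
          omega
        · exfalso
          rw [hφ2 a h2 h1, hφ3 a' h2'] at he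
          have hmB := hBmem ⟨a - b - 1, by omega⟩
          rw [he, hBdef, Finset.mem_sdiff, Finset.mem_Icc] at hmB
          omega
        · exfalso
          rw [hφ2 a' h2' h1', hφ3 a h2] at he
          have hmB := hBmem ⟨a' - b - 1, by omega⟩
          rw [← he, hBdef, Finset.mem_sdiff, Finset.mem_Icc] at hmB
          omega
        · rw [hφ3 a h2, hφ3 a' h2'] at he
          exact he
    · intro m
      by_cases hm : m ∈ A
      · have : m ∈ Set.range eA := by rw [Finset.range_orderEmbOfFin]; exact hm
        obtain ⟨i, hi⟩ := this
        refine ⟨(i : ℕ) + 1, ?_⟩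
        have hcond : 1 ≤ (i : ℕ) + 1 ∧ (i : ℕ) + 1 ≤ b := ⟨by omega, by omega⟩
        rw [hφ1 _ hcond, ← hi]
        congr 1
      · by_cases hm2 : m ∈ B
        · have : m ∈ Set.range eB := by rw [Finset.range_orderEmbOfFin]; exact hm2
          obtain ⟨i, hi⟩ := this
          refine ⟨b + 1 + (i : ℕ), ?_⟩
          have hi2 : (i : ℕ) < n - b := i.2
          have hcond2 : 1 ≤ b + 1 + (i : ℕ) ∧ b + 1 + (i : ℕ) ≤ n := ⟨by omega, by omega⟩
          have hcond1 : ¬(1 ≤ b + 1 + (i : ℕ) ∧ b + 1 + (i : ℕ) ≤ b) := by omega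
          rw [hφ2 _ hcond2 hcond1, ← hi]
          congr 1
          ext
          simp only []
          omega
        · refine ⟨m, ?_⟩
          apply hφ3
          intro hc
          rw [hBdef, Finset.mem_sdiff] at hm2
          simp only [Finset.mem_Icc] at hm2
          exact hm2 ⟨⟨hc.1, hc.2⟩, hm⟩
  refine ⟨Equiv.ofBijective φ hbij, ?_, ?_, ?_, ?_⟩
  · intro i hi
    simp only [Set.mem_Icc] at hi
    exact hφ3 i (by omega)
  · constructor
    · intro i j hi1 hij hjb
      show φ i < φ j
      rw [hφ1 i ⟨hi1, by omega⟩, hφ1 j ⟨by omega, hjb⟩]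
      exact (A.orderEmbOfFin hcard).strictMono (by simp [Fin.lt_def]; omega)
    · intro i j hi1 hij hjn
      show φ i < φ j
      rw [hφ2 i ⟨by omega, by omega⟩ (by omega), hφ2 j ⟨by omega, hjn⟩ (by omega)]
      exact (B.orderEmbOfFin hcardB).strictMono (by simp [Fin.lt_def]; omega)
  · intro m h1 h2
    show φ m ∈ A
    rw [hφ1 m ⟨h1, h2⟩]
    exact hAmem _
  · intro m h1 h2
    show φ m ∈ Finset.Icc 1 n \ A
    rw [hφ2 m ⟨by omega, h2⟩ (by omega)]
    exact hBmem _

def rowFinset (l : List ℕ) : Finset (ℕ × ℕ) :=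
  (Finset.range l.length).biUnion (fun i => (Finset.range (l.getD i 0)).image (fun j => (i, j)))

lemma mem_rowFinset {l : List ℕ} {p : ℕ × ℕ} : p ∈ rowFinset l ↔ p.2 < l.getD p.1 0 := by
  unfold rowFinset
  simp only [Finset.mem_biUnion, Finset.mem_range, Finset.mem_image]
  constructor
  · rintro ⟨i, hi, j, hj, rfl⟩
    exact hj
  · intro h
    refine ⟨p.1, ?_, p.2, h, rfl⟩
    by_contra hc
    rw [List.getD_eq_default _ _ (by omega)] at h
    omega

lemma sum_getD (l : List ℕ) : ∑ i ∈ Finset.range l.length, l.getD i 0 = l.sum := by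
  induction l with
  | nil => simp
  | cons a t ih =>
    rw [List.length_cons, Finset.sum_range_succ', List.sum_cons]
    simp only [List.getD_cons_succ, List.getD_cons_zero]
    rw [ih]
    omega

lemma card_rowFinset (l : List ℕ) : (rowFinset l).card = l.sum := by
  unfold rowFinset
  rw [Finset.card_biUnion]
  · rw [← sum_getD l]
    apply Finset.sum_congr rfl
    intro i _
    rw [Finset.card_image_of_injective _ (fun a a' h => (Prod.ext_iff.1 h).2),
      Finset.card_range]
  · intro i _ j _ hij
    simp only [Finset.disjoint_left, Finset.mem_image, Finset.mem_range]
    rintro p ⟨a, _, rfl⟩ ⟨a', _, he⟩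
    exact hij ((Prod.ext_iff.1 he).1.symm)

def nodesS {r : ℕ} (lam : Fin r → List ℕ) (s : ℕ) : Finset (Fin r × ℕ × ℕ) :=
  (Finset.univ.filter (fun k : Fin r => (k : ℕ) < s)).biUnion
    (fun k => (rowFinset (lam k)).image (fun p => (k, p)))

lemma mem_nodesS {r : ℕ} {lam : Fin r → List ℕ} {s : ℕ} {x : Fin r × ℕ × ℕ} :
    x ∈ nodesS lam s ↔ (x.1 : ℕ) < s ∧ x ∈ Nodes lam := by
  unfold nodesS
  simp only [Finset.mem_biUnion, Finset.mem_filter, Finset.mem_univ, true_and,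
    Finset.mem_image]
  constructor
  · rintro ⟨k, hk, p, hp, rfl⟩
    exact ⟨hk, by simpa [Nodes] using mem_rowFinset.1 hp⟩
  · rintro ⟨hk, hx⟩
    exact ⟨x.1, hk, x.2, mem_rowFinset.2 (by simpa [Nodes] using hx), rfl⟩

lemma card_nodesS {r : ℕ} (lam : Fin r → List ℕ) (s : ℕ) :
    (nodesS lam s).card = ∑ k ∈ Finset.univ.filter (fun k : Fin r => (k : ℕ) < s),
      (lam k).sum := by
  unfold nodesS
  rw [Finset.card_biUnion]
  · apply Finset.sum_congr rfl
    intro k _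
    rw [Finset.card_image_of_injective _ (fun a a' h => (Prod.ext_iff.1 h).2),
      card_rowFinset]
  · intro i _ j _ hij
    simp only [Finset.disjoint_left, Finset.mem_image]
    rintro p ⟨a, _, rfl⟩ ⟨a', _, he⟩
    exact hij ((Prod.ext_iff.1 he).1.symm)

lemma bijOn_Icc {n : ℕ} {w : Equiv.Perm ℕ} (hw : ∀ i, i ∉ Set.Icc 1 n → w i = i) :
    Set.BijOn ⇑w (Set.Icc 1 n) (Set.Icc 1 n) := by
  refine ⟨?_, fun x _ y _ h => w.injective h, ?_⟩
  · intro m hm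
    rw [Set.mem_Icc] at hm ⊢
    exact maps_Icc hw m hm.1 hm.2
  · intro m hm
    rw [Set.mem_Icc] at hm
    have hs := maps_Icc (symm_fix hw) m hm.1 hm.2
    exact ⟨w.symm m, Set.mem_Icc.2 hs, w.apply_symm_apply m⟩

lemma node_left {r : ℕ} {lam : Fin r → List ℕ} {k : Fin r} {i j : ℕ}
    (h : (k, i, j + 1) ∈ Nodes lam) : (k, i, j) ∈ Nodes lam := by
  simp only [Nodes, Set.mem_setOf_eq] at h ⊢
  omega

lemma node_up {r : ℕ} {lam : Fin r → List ℕ} (hp : ∀ k, IsPartitionList (lam k))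
    {k : Fin r} {i j : ℕ} (h : (k, i + 1, j) ∈ Nodes lam) : (k, i, j) ∈ Nodes lam := by
  simp only [Nodes, Set.mem_setOf_eq] at h ⊢
  have hmono : (lam k).getD (i + 1) 0 ≤ (lam k).getD i 0 := by
    by_cases hi : i + 1 < (lam k).length
    · rw [List.getD_eq_getElem _ _ hi, List.getD_eq_getElem _ _ (by omega)]
      have h2 := List.Pairwise.rel_get_of_lt (hp k).1
        (a := ⟨i, by omega⟩) (b := ⟨i + 1, hi⟩) (by simp [Fin.lt_def])
      simpa [List.get_eq_getElem] using h2
    · rw [List.getD_eq_default _ _ (by omega)]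
      omega
  omega


/-- for a multipartition `lam` of `n` with `|lam^{(1)}|+⋯+|lam^{(s)}| = b`,
the set `Std(lam)` is the disjoint union, over distinguished right coset
representatives `w` of `𝔖_b × 𝔖_{n-b}` in `𝔖_n`, of the sets `Std_{b,n-b}(lam)·w`
(the right action of `w` on a tableau replaces each entry `m` by `m·w`, i.e. `w m`). -/
theorem std_disjoint_union_cosets (n r s b : ℕ) (hs1 : 1 ≤ s) (hsr : s < r) (hb : b ≤ n)
    (lam : Fin r → List ℕ) (hlam : IsMultipartition n lam)
    (hlb : ∑ k ∈ Finset.univ.filter (fun k : Fin r => (k : ℕ) < s), (lam k).sum = b) :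
    (StdTab n lam =
      ⋃ w ∈ {w : Equiv.Perm ℕ | IsDistinguished n b w},
        (fun f => ⇑w ∘ f) '' StdBN n s b lam) ∧
    (∀ w w' : Equiv.Perm ℕ, IsDistinguished n b w → IsDistinguished n b w' → w ≠ w' →
      Disjoint ((fun f => ⇑w ∘ f) '' StdBN n s b lam)
        ((fun f => ⇑w' ∘ f) '' StdBN n s b lam)) := by
  classical
  obtain ⟨hpart, hsum⟩ := hlam
  constructor
  · ext f
    simp only [Set.mem_iUnion, Set.mem_setOf_eq, Set.mem_image, exists_prop]
    constructor
    · intro hf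
      obtain ⟨hbij, hzero, hrow, hcol⟩ := hf
      set N := nodesS lam s with hN
      have hNsub : ∀ x ∈ N, x ∈ Nodes lam := fun x hx => (mem_nodesS.1 hx).2
      set A := N.image f with hA
      have hcardA : A.card = b := by
        rw [hA, Finset.card_image_of_injOn
          (fun x hx y hy h => hbij.injOn (hNsub x hx) (hNsub y hy) h), hN, card_nodesS, hlb]
      have hAsub : A ⊆ Finset.Icc 1 n := by
        intro m hm
        obtain ⟨x, hx, rfl⟩ := Finset.mem_image.1 hm
        have := hbij.mapsTo (hNsub x hx)
        simpa [Finset.mem_Icc, Set.mem_Icc] using this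
      obtain ⟨w, hwfix, hwinc, hw1, hw2⟩ := exists_perm hb A hAsub hcardA
      have hdist := distinguished_of_inc hb hwfix hwinc
      have hfA : ∀ x ∈ Nodes lam, (f x ∈ A ↔ (x.1 : ℕ) < s) := by
        intro x hx
        constructor
        · intro hm
          obtain ⟨y, hy, he⟩ := Finset.mem_image.1 hm
          have := hbij.injOn (hNsub y hy) hx he
          rw [← this]
          exact (mem_nodesS.1 hy).1
        · intro hxs
          exact Finset.mem_image_of_mem f (mem_nodesS.2 ⟨hxs, hx⟩)
      have hws1 : ∀ m ∈ A, 1 ≤ w.symm m ∧ w.symm m ≤ b := by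
        intro m hm
        set a := w.symm m with ha
        have hwa : w a = m := w.apply_symm_apply m
        by_cases h1 : 1 ≤ a ∧ a ≤ n
        · by_contra h
          have h2 : b + 1 ≤ a ∧ a ≤ n := by omega
          have := hw2 a h2.1 h2.2
          rw [hwa, Finset.mem_sdiff] at this
          exact this.2 hm
        · exfalso
          have : w a = a := hwfix a (by simp only [Set.mem_Icc]; omega)
          rw [hwa] at this
          have := hAsub hm
          simp only [Finset.mem_Icc] at this
          omega
      have hws2 : ∀ m, m ∈ Finset.Icc 1 n → m ∉ A → b + 1 ≤ w.symm m ∧ w.symm m ≤ n := by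
        intro m hmI hmA
        set a := w.symm m with ha
        have hwa : w a = m := w.apply_symm_apply m
        simp only [Finset.mem_Icc] at hmI
        by_cases h1 : 1 ≤ a ∧ a ≤ n
        · constructor
          · by_contra h
            have h2 : 1 ≤ a ∧ a ≤ b := by omega
            have := hw1 a h2.1 h2.2
            rw [hwa] at this
            exact hmA this
          · exact h1.2
        · exfalso
          have : w a = a := hwfix a (by simp only [Set.mem_Icc]; omega)
          rw [hwa] at this
          omega
      have hmonoA : ∀ m m', m ∈ A → m' ∈ A → m < m' → w.symm m < w.symm m' := by
        intro m m' hm hm' hlt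
        by_contra h
        have h1 := hws1 m hm
        have h2 := hws1 m' hm'
        rcases eq_or_lt_of_le (not_lt.1 h) with he | hlt2
        · have : m' = m := by
            have := congrArg w he
            rwa [w.apply_symm_apply, w.apply_symm_apply] at this
          omega
        · have := hwinc.1 _ _ h2.1 hlt2 h1.2
          rw [w.apply_symm_apply, w.apply_symm_apply] at this
          omega
      have hmonoB : ∀ m m', m ∈ Finset.Icc 1 n → m ∉ A → m' ∈ Finset.Icc 1 n → m' ∉ A →
          m < m' → w.symm m < w.symm m' := by
        intro m m' hmI hmA hm'I hm'A hlt
        by_contra h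
        have h1 := hws2 m hmI hmA
        have h2 := hws2 m' hm'I hm'A
        rcases eq_or_lt_of_le (not_lt.1 h) with he | hlt2
        · have : m' = m := by
            have := congrArg w he
            rwa [w.apply_symm_apply, w.apply_symm_apply] at this
          omega
        · have := hwinc.2 _ _ h2.1 hlt2 h1.2
          rw [w.apply_symm_apply, w.apply_symm_apply] at this
          omega
      set g : Fin r × ℕ × ℕ → ℕ := ⇑w.symm ∘ f with hg
      have hfIcc : ∀ x ∈ Nodes lam, f x ∈ Finset.Icc 1 n := by
        intro x hx
        have := hbij.mapsTo hx
        simpa [Finset.mem_Icc, Set.mem_Icc] using this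
      have hgval : ∀ x ∈ Nodes lam,
          ((x.1 : ℕ) < s → 1 ≤ g x ∧ g x ≤ b) ∧ (¬ (x.1 : ℕ) < s → b + 1 ≤ g x ∧ g x ≤ n) := by
        intro x hx
        constructor
        · intro hxs
          exact hws1 _ ((hfA x hx).2 hxs)
        · intro hxs
          exact hws2 _ (hfIcc x hx) (fun hc => hxs ((hfA x hx).1 hc))
      have hstep : ∀ x y, x ∈ Nodes lam → y ∈ Nodes lam → x.1 = y.1 → f x < f y →
          g x < g y := by
        intro x y hx hy hxy hlt
        by_cases hxs : (x.1 : ℕ) < s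
        · exact hmonoA _ _ ((hfA x hx).2 hxs) ((hfA y hy).2 (hxy ▸ hxs)) hlt
        · have hys : ¬ (y.1 : ℕ) < s := hxy ▸ hxs
          exact hmonoB _ _ (hfIcc x hx) (fun hc => hxs ((hfA x hx).1 hc))
            (hfIcc y hy) (fun hc => hys ((hfA y hy).1 hc)) hlt
      refine ⟨w, hdist, g, ⟨⟨?_, ?_, ?_, ?_⟩, ?_⟩, ?_⟩
      · -- BijOn g
        have hsymmBij : Set.BijOn ⇑w.symm (Set.Icc 1 n) (Set.Icc 1 n) :=
          bijOn_Icc (symm_fix hwfix)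
        exact hsymmBij.comp hbij
      · intro x hx
        rw [hg]
        simp only [Function.comp_apply, hzero x hx]
        exact symm_fix hwfix 0 (by simp [Set.mem_Icc])
      · intro k i j hnode
        exact hstep _ _ (node_left hnode) hnode rfl (hrow k i j hnode)
      · intro k i j hnode
        exact hstep _ _ (node_up hpart hnode) hnode rfl (hcol k i j hnode)
      · intro x hx
        constructor
        · intro hgb
          by_contra hxs
          have := ((hgval x hx).2 hxs).1
          omega
        · intro hxs
          exact ((hgval x hx).1 hxs).2
      · funext x
        simp [hg, Function.comp_apply, w.apply_symm_apply]
    · rintro ⟨w, hdist, g, hgmem, rfl⟩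
      obtain ⟨⟨gbij, gzero, grow, gcol⟩, gblk⟩ := hgmem
      have hwinc := inc_of_distinguished hb hdist
      have hgIcc : ∀ x ∈ Nodes lam, 1 ≤ g x ∧ g x ≤ n := by
        intro x hx
        have := gbij.mapsTo hx
        simpa [Set.mem_Icc] using this
      have hstep : ∀ x y, x ∈ Nodes lam → y ∈ Nodes lam → x.1 = y.1 → g x < g y →
          w (g x) < w (g y) := by
        intro x y hx hy hxy hlt
        by_cases hxs : (x.1 : ℕ) < s
        · have h1 : g x ≤ b := (gblk x hx).2 hxs
          have h2 : g y ≤ b := (gblk y hy).2 (hxy ▸ hxs)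
          exact hwinc.1 _ _ (hgIcc x hx).1 hlt h2
        · have h1 : ¬ g x ≤ b := fun hc => hxs ((gblk x hx).1 hc)
          exact hwinc.2 _ _ (by omega) hlt (hgIcc y hy).2
      refine ⟨?_, ?_, ?_, ?_⟩
      · exact (bijOn_Icc hdist.1).comp gbij
      · intro x hx
        simp only [Function.comp_apply, gzero x hx]
        exact hdist.1 0 (by simp [Set.mem_Icc])
      · intro k i j hnode
        exact hstep _ _ (node_left hnode) hnode rfl (grow k i j hnode)
      · intro k i j hnode
        exact hstep _ _ (node_up hpart hnode) hnode rfl (gcol k i j hnode)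
  · intro w w' hw hw' hne
    rw [Set.disjoint_left]
    rintro f ⟨g, hg, rfl⟩ ⟨g', hg', he⟩
    apply hne
    apply eq_of_distinguished hb hw hw'
    intro m h1 hmb
    obtain ⟨⟨gbij, _, _, _⟩, gblk⟩ := hg
    obtain ⟨⟨gbij', _, _, _⟩, gblk'⟩ := hg'
    have hmI : m ∈ Set.Icc 1 n := Set.mem_Icc.2 ⟨h1, by omega⟩
    obtain ⟨x, hx, hgx⟩ := gbij.surjOn hmI
    have hxs : (x.1 : ℕ) < s := (gblk x hx).1 (by rw [hgx]; exact hmb)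
    have hg'I := gbij'.mapsTo hx
    rw [Set.mem_Icc] at hg'I
    have hxb : g' x ≤ b := (gblk' x hx).2 hxs
    refine ⟨g' x, hg'I.1, hxb, ?_⟩
    have hcf := congrFun he x
    simp only [Function.comp_apply] at hcf
    rw [← hgx]
    exact hcf.symm
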